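/- Let Q be an edge-coloring of the complete graph on a finite nonempty vertex set that contains no rainbow triangle (no three vertices whose three connecting edges receive pairwise distinct colors). Let c(Q) be the number of colors used, and let ρ(Q) be the number of colors λ such that the edges of color λ contain a monochromatic triangle. Then c(Q) + ρ(Q) ≤ |V(Q)| − 1. -/

import Mathlib

set_option linter.unusedSectionVars false

open Classical

attribute [local instance] Classical.propDecidable

noncomputable section GallaiAux

namespace GallaiAux

variable {V : Type*}

def RBF (col : Sym2 V → ℕ) : Prop :=
  ∀ x y z : V, x ≠ y → x ≠ z → y ≠ z →
      ¬ (col s(x, y) ≠ col s(x, z) ∧ col s(x, y) ≠ col s(y, z) ∧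
         col s(x, z) ≠ col s(y, z))

def outG (col : Sym2 V → ℕ) (S : Set ℕ) : SimpleGraph V where
  Adj x y := x ≠ y ∧ col s(x, y) ∉ S
  symm := ⟨by intro x y h; exact ⟨h.1.symm, by rw [Sym2.eq_swap]; exact h.2⟩⟩
  loopless := ⟨by intro x h; exact h.1 rfl⟩

variable {col : Sym2 V → ℕ}

lemma rbf_cases (h : RBF col) {x y z : V} (hxy : x ≠ y) (hxz : x ≠ z) (hyz : y ≠ z) :
    col s(x, y) = col s(x, z) ∨ col s(x, y) = col s(y, z) ∨ col s(x, z) = col s(y, z) := by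
  have := h x y z hxy hxz hyz
  by_contra hc
  push_neg at hc
  exact this ⟨hc.1, hc.2.1, hc.2.2⟩

lemma sight_const (h : RBF col) (S : Set ℕ) {v a b : V}
    (w : (outG col S).Walk a b)
    (hv : (outG col S).connectedComponentMk v ≠ (outG col S).connectedComponentMk a) :
    col s(v, a) = col s(v, b) := by
  induction w with
  | nil => rfl
  | @cons a c b hadj w ih =>
      have hac : (outG col S).connectedComponentMk a = (outG col S).connectedComponentMk c :=
        SimpleGraph.ConnectedComponent.connectedComponentMk_eq_of_adj hadj
      have hv' : (outG col S).connectedComponentMk v ≠ (outG col S).connectedComponentMk c := by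
        rw [← hac]; exact hv
      have hva : v ≠ a := by rintro rfl; exact hv rfl
      have hvc : v ≠ c := by rintro rfl; exact hv' rfl
      have key : col s(v, a) = col s(v, c) := by
        rcases rbf_cases h hva hvc hadj.1 with h1 | h2 | h3
        · exact h1
        · exfalso
          exact hv (SimpleGraph.ConnectedComponent.connectedComponentMk_eq_of_adj
            ⟨hva, h2 ▸ hadj.2⟩)
        · exfalso
          exact hv' (SimpleGraph.ConnectedComponent.connectedComponentMk_eq_of_adj
            ⟨hvc, h3 ▸ hadj.2⟩)
      rw [key]; exact ih hv'

lemma cross_mem (S : Set ℕ) {x y : V}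
    (hq : (outG col S).connectedComponentMk x ≠ (outG col S).connectedComponentMk y) :
    col s(x, y) ∈ S := by
  by_contra hc
  have hxy : x ≠ y := by rintro rfl; exact hq rfl
  exact hq (SimpleGraph.ConnectedComponent.connectedComponentMk_eq_of_adj ⟨hxy, hc⟩)

def colQ (col : Sym2 V → ℕ) (S : Set ℕ) (q q' : (outG col S).ConnectedComponent) : ℕ :=
  col s(q.out, q'.out)

lemma colQ_symm (S : Set ℕ) (q q' : (outG col S).ConnectedComponent) :
    colQ col S q q' = colQ col S q' q := by
  unfold colQ; rw [Sym2.eq_swap]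

lemma mk_out (S : Set ℕ) (q : (outG col S).ConnectedComponent) :
    (outG col S).connectedComponentMk q.out = q := q.out_eq

lemma reach_of_mk_eq {G : SimpleGraph V} {x y : V}
    (h : G.connectedComponentMk x = G.connectedComponentMk y) : G.Reachable x y :=
  SimpleGraph.ConnectedComponent.exact h

lemma colQ_spec (h : RBF col) (S : Set ℕ) {x y : V}
    (hq : (outG col S).connectedComponentMk x ≠ (outG col S).connectedComponentMk y) :
    col s(x, y) =
      colQ col S ((outG col S).connectedComponentMk x) ((outG col S).connectedComponentMk y) := by
  set G := outG col S
  set a := ((outG col S).connectedComponentMk y).out with ha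
  set b := ((outG col S).connectedComponentMk x).out with hb
  have hay : G.connectedComponentMk a = G.connectedComponentMk y := mk_out S _
  have hbx : G.connectedComponentMk b = G.connectedComponentMk x := mk_out S _
  have r1 : G.Reachable y a := reach_of_mk_eq hay.symm
  have r2 : G.Reachable x b := reach_of_mk_eq hbx.symm
  have e1 : col s(x, y) = col s(x, a) :=
    r1.elim fun w => sight_const h S w hq
  have hxa : G.connectedComponentMk a ≠ G.connectedComponentMk x := by
    rw [hay]; exact fun hh => hq hh.symm
  have e2 : col s(a, x) = col s(a, b) :=
    r2.elim fun w => sight_const h S w hxa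
  calc col s(x, y) = col s(x, a) := e1
    _ = col s(a, x) := by rw [Sym2.eq_swap]
    _ = col s(a, b) := e2
    _ = col s(b, a) := by rw [Sym2.eq_swap]
    _ = colQ col S (G.connectedComponentMk x) (G.connectedComponentMk y) := rfl


section GraphLemmas

variable {W : Type*} [Fintype W] [DecidableEq W]

omit [Fintype W] [DecidableEq W] in
lemma reachable_of_step_walk {G G' : SimpleGraph W}
    (hstep : ∀ x y, G.Adj x y → G'.Reachable x y) {a b : W} (w : G.Walk a b) :
    G'.Reachable a b := by
  induction w with
  | nil => exact SimpleGraph.Reachable.refl _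
  | cons hadj w ih => exact (hstep _ _ hadj).trans ih

omit [Fintype W] [DecidableEq W] in
lemma reachable_of_step {G G' : SimpleGraph W}
    (hstep : ∀ x y, G.Adj x y → G'.Reachable x y) {a b : W} (h : G.Reachable a b) :
    G'.Reachable a b :=
  h.elim fun w => reachable_of_step_walk hstep w

lemma conn_card_le_edges (G : SimpleGraph W) (h : G.Connected) :
    Fintype.card W ≤ G.edgeFinset.card + 1 := by
  classical
  obtain ⟨q0⟩ := h.nonempty
  have hpred : ∀ q : W, q ≠ q0 → ∃ y, G.Adj q y ∧ G.dist q0 y + 1 = G.dist q0 q := by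
    intro q hq
    have hd : 0 < G.dist q0 q := h.pos_dist_of_ne (Ne.symm hq)
    obtain ⟨w, hw⟩ := h.exists_walk_length_eq_dist q0 q
    cases hw' : w.reverse with
    | nil =>
        exfalso
        have : w.length = 0 := by
          have := congrArg SimpleGraph.Walk.length hw'
          rwa [SimpleGraph.Walk.length_reverse] at this
        omega
    | @cons _ c _ hadj p =>
        refine ⟨c, hadj, ?_⟩
        have hlen : p.length + 1 = G.dist q0 q := by
          have := congrArg SimpleGraph.Walk.length hw'
          rw [SimpleGraph.Walk.length_reverse] at this
          simpa [hw] using this.symm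
        have h1 : G.dist q0 c ≤ p.length := by
          have : G.dist c q0 ≤ p.length := SimpleGraph.dist_le p
          rwa [SimpleGraph.dist_comm] at this
        have h2 : G.dist q0 q ≤ G.dist q0 c + 1 := by
          have : G.dist c q ≤ 1 := by
            have := SimpleGraph.dist_le (SimpleGraph.Walk.cons hadj.symm SimpleGraph.Walk.nil)
            simpa using this
          calc G.dist q0 q ≤ G.dist q0 c + G.dist c q := h.dist_triangle
            _ ≤ G.dist q0 c + 1 := by omega
        omega
  choose pred hpred1 hpred2 using hpred
  let f : W → Sym2 W := fun q => if hq : q ≠ q0 then s(q, pred q hq) else s(q0, q0)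
  have hmaps : ∀ q ∈ Finset.univ.erase q0, f q ∈ G.edgeFinset := by
    intro q hq
    have hq' : q ≠ q0 := (Finset.mem_erase.mp hq).1
    simp only [f, dif_pos hq', SimpleGraph.mem_edgeFinset, SimpleGraph.mem_edgeSet]
    exact hpred1 q hq'
  have hinj : ∀ q1 ∈ Finset.univ.erase q0, ∀ q2 ∈ Finset.univ.erase q0, f q1 = f q2 → q1 = q2 := by
    intro q1 hq1 q2 hq2 hf
    have h1 : q1 ≠ q0 := (Finset.mem_erase.mp hq1).1
    have h2 : q2 ≠ q0 := (Finset.mem_erase.mp hq2).1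
    simp only [f, dif_pos h1, dif_pos h2, Sym2.eq_iff] at hf
    rcases hf with ⟨rfl, -⟩ | ⟨hac, hbd⟩
    · rfl
    · exfalso
      have e1 := hpred2 q1 h1
      have e2 := hpred2 q2 h2
      rw [hbd] at e1
      rw [← hac] at e2
      omega
  have := Finset.card_le_card_of_injOn f hmaps (fun q1 hq1 q2 hq2 => hinj q1 hq1 q2 hq2)
  rw [Finset.card_erase_of_mem (Finset.mem_univ q0), Finset.card_univ] at this
  omega

lemma conn_tri_card_le_edges (G : SimpleGraph W) (h : G.Connected)
    {q1 q2 q3 : W} (h12 : G.Adj q1 q2) (h13 : G.Adj q1 q3) (h23 : G.Adj q2 q3) :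
    Fintype.card W + 1 ≤ G.edgeFinset.card + 1 := by
  classical
  set G' := G.deleteEdges {s(q1, q2)} with hG'
  have hsub : G' ≤ G := SimpleGraph.deleteEdges_le _
  have hadj' : ∀ x y, G'.Adj x y ↔ (G.Adj x y ∧ s(x, y) ≠ s(q1, q2)) := by
    intro x y
    rw [hG', SimpleGraph.deleteEdges_adj]
    simp
  have h13' : G'.Adj q1 q3 := by
    rw [hadj']
    refine ⟨h13, fun he => ?_⟩
    rw [Sym2.eq_iff] at he
    rcases he with ⟨-, rfl⟩ | ⟨rfl, rfl⟩
    · exact G.loopless.irrefl _ h23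
    · exact G.loopless.irrefl _ h13
  have h23' : G'.Adj q2 q3 := by
    rw [hadj']
    refine ⟨h23, fun he => ?_⟩
    rw [Sym2.eq_iff] at he
    rcases he with ⟨rfl, rfl⟩ | ⟨-, rfl⟩
    · exact G.loopless.irrefl _ h23
    · exact G.loopless.irrefl _ h13
  have hconn' : G'.Connected := by
    rw [SimpleGraph.connected_iff]
    refine ⟨?_, h.nonempty⟩
    intro a b
    refine reachable_of_step ?_ (h a b)
    intro x y hxy
    by_cases he : s(x, y) = s(q1, q2)
    · rw [Sym2.eq_iff] at he
      rcases he with ⟨rfl, rfl⟩ | ⟨rfl, rfl⟩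
      · exact (h13'.reachable).trans h23'.symm.reachable
      · exact (h23'.reachable).trans h13'.symm.reachable
    · exact SimpleGraph.Adj.reachable (by rw [hadj']; exact ⟨hxy, he⟩)
  have hcard : Fintype.card W ≤ G'.edgeFinset.card + 1 := by
    convert conn_card_le_edges G' hconn'
  have hss : G'.edgeFinset ⊆ G.edgeFinset.erase s(q1, q2) := by
    intro e he
    rw [SimpleGraph.mem_edgeFinset] at he
    rw [Finset.mem_erase]
    constructor
    · rintro rfl
      rw [hG', SimpleGraph.edgeSet_deleteEdges] at he
      exact he.2 rfl
    · rw [SimpleGraph.mem_edgeFinset]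
      exact (SimpleGraph.edgeSet_mono hsub) he
  have : G'.edgeFinset.card ≤ G.edgeFinset.card - 1 := by
    have := Finset.card_le_card hss
    rwa [Finset.card_erase_of_mem (by rw [SimpleGraph.mem_edgeFinset]; exact h12)] at this
  have hpos : 1 ≤ G.edgeFinset.card :=
    Finset.card_pos.mpr ⟨s(q1, q2), by rw [SimpleGraph.mem_edgeFinset]; exact h12⟩
  omega

end GraphLemmas


section Main

variable [Fintype V] [DecidableEq V]

def CA (col : Sym2 V → ℕ) : Set ℕ := col '' {e : Sym2 V | ¬ e.IsDiag}

def RA (col : Sym2 V → ℕ) : Set ℕ :=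
  {lam : ℕ | ∃ x y z : V, x ≠ y ∧ x ≠ z ∧ y ≠ z ∧
        col s(x, y) = lam ∧ col s(x, z) = lam ∧ col s(y, z) = lam}

def cg (col : Sym2 V → ℕ) (γ : ℕ) : SimpleGraph V where
  Adj x y := x ≠ y ∧ col s(x, y) = γ
  symm := ⟨by intro x y h; exact ⟨h.1.symm, by rw [Sym2.eq_swap]; exact h.2⟩⟩
  loopless := ⟨by intro x h; exact h.1 rfl⟩

def SpanSet (col : Sym2 V → ℕ) : Set ℕ := {γ | (cg col γ).Connected}

def redG (col : Sym2 V → ℕ) (S : Set ℕ) (γ : ℕ) :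
    SimpleGraph ((outG col S).ConnectedComponent) where
  Adj q q' := q ≠ q' ∧ colQ col S q q' = γ
  symm := ⟨by intro q q' h; exact ⟨h.1.symm, by rw [colQ_symm]; exact h.2⟩⟩
  loopless := ⟨by intro q h; exact h.1 rfl⟩

lemma redG_reach_of_walk (h : RBF col) (S : Set ℕ) (γ : ℕ) {x y : V}
    (w : (cg col γ).Walk x y) :
    (redG col S γ).Reachable ((outG col S).connectedComponentMk x)
      ((outG col S).connectedComponentMk y) := by
  induction w with
  | nil => exact SimpleGraph.Reachable.refl _
  | @cons a c b hadj w ih =>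
      by_cases hac : (outG col S).connectedComponentMk a = (outG col S).connectedComponentMk c
      · rw [hac]; exact ih
      · refine SimpleGraph.Reachable.trans (SimpleGraph.Adj.reachable ?_) ih
        exact ⟨hac, ((colQ_spec h S hac).symm).trans hadj.2⟩

lemma redG_connected (h : RBF col) (S : Set ℕ) {γ : ℕ} (hγ : (cg col γ).Connected) :
    (redG col S γ).Connected := by
  rw [SimpleGraph.connected_iff]
  constructor
  · intro q q'
    have r : (cg col γ).Reachable q.out q'.out := hγ q.out q'.out
    have := r.elim fun w => redG_reach_of_walk h S γ w
    rwa [mk_out, mk_out] at this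
  · obtain ⟨v⟩ := hγ.nonempty
    exact ⟨(outG col S).connectedComponentMk v⟩

lemma exists_max_comp (h : RBF col) (T : Set ℕ)
    (hedge : ∃ x y : V, x ≠ y ∧ col s(x, y) ∉ T) :
    ∃ γ x₀, γ ∉ T ∧
      (∀ v, ¬ (cg col γ).Reachable x₀ v →
        col s(v, x₀) ∈ T ∧ ∀ y, (cg col γ).Reachable x₀ y → col s(v, y) = col s(v, x₀)) := by
  classical
  set m : V × ℕ → ℕ := fun p =>
    (Finset.univ.filter (fun y => (cg col p.2).Reachable p.1 y)).card with hm
  set P : Finset (V × ℕ) :=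
    (Finset.univ ×ˢ Finset.univ.image col).filter
      (fun p => p.2 ∉ T ∧ ∃ y, y ≠ p.1 ∧ col s(p.1, y) = p.2) with hP
  have hPne : P.Nonempty := by
    obtain ⟨x, y, hxy, hco⟩ := hedge
    refine ⟨(x, col s(x, y)), ?_⟩
    rw [hP, Finset.mem_filter]
    refine ⟨?_, hco, y, hxy.symm, rfl⟩
    rw [Finset.mem_product]
    exact ⟨Finset.mem_univ _, Finset.mem_image.mpr ⟨s(x, y), Finset.mem_univ _, rfl⟩⟩
  obtain ⟨p, hpP, hpmax⟩ := P.exists_max_image m hPne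
  obtain ⟨x₀, γ⟩ := p
  rw [hP, Finset.mem_filter] at hpP
  obtain ⟨-, hγT, y₁, hy₁, hcy₁⟩ := hpP
  refine ⟨γ, x₀, hγT, ?_⟩
  intro v hv
  have hsight : ∀ y, (cg col γ).Reachable x₀ y → col s(v, y) = col s(v, x₀) := by
    have key : ∀ a b, (cg col γ).Walk a b → (cg col γ).Reachable x₀ a →
        col s(v, a) = col s(v, b) := by
      intro a b w
      induction w with
      | nil => intro _; rfl
      | @cons a c b hadj w ih =>
          intro hra
          have hrc : (cg col γ).Reachable x₀ c := hra.trans hadj.reachable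
          have hva : v ≠ a := by rintro rfl; exact hv hra
          have hvc : v ≠ c := by rintro rfl; exact hv hrc
          have step : col s(v, a) = col s(v, c) := by
            rcases rbf_cases h hva hvc hadj.1 with h1 | h2 | h3
            · exact h1
            · exfalso
              have hadj2 : (cg col γ).Adj v a := ⟨hva, h2 ▸ hadj.2⟩
              exact hv (hra.trans hadj2.reachable.symm)
            · exfalso
              have hadj3 : (cg col γ).Adj v c := ⟨hvc, h3 ▸ hadj.2⟩
              exact hv (hrc.trans hadj3.reachable.symm)
          rw [step]; exact ih hrc
    intro y hy
    exact (hy.elim fun w => key x₀ y w (SimpleGraph.Reachable.refl _)).symm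
  refine ⟨?_, hsight⟩
  by_contra hδT
  set δ := col s(v, x₀) with hδ
  have hvx₀ : v ≠ x₀ := by rintro rfl; exact hv (SimpleGraph.Reachable.refl _)
  have hPmem : (v, δ) ∈ P := by
    rw [hP, Finset.mem_filter]
    refine ⟨?_, hδT, x₀, hvx₀.symm, rfl⟩
    rw [Finset.mem_product]
    exact ⟨Finset.mem_univ _, Finset.mem_image.mpr ⟨s(v, x₀), Finset.mem_univ _, rfl⟩⟩
  have hlt : m (x₀, γ) < m (v, δ) := by
    rw [hm]
    apply Finset.card_lt_card
    constructor
    · intro y hy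
      rw [Finset.mem_filter] at hy ⊢
      refine ⟨Finset.mem_univ _, ?_⟩
      have hvy : v ≠ y := by rintro rfl; exact hv hy.2
      have : col s(v, y) = δ := hsight y hy.2
      exact SimpleGraph.Adj.reachable ⟨hvy, this⟩
    · intro hsub
      have : v ∈ Finset.univ.filter (fun y => (cg col δ).Reachable v y) :=
        Finset.mem_filter.mpr ⟨Finset.mem_univ _, SimpleGraph.Reachable.refl _⟩
      have := hsub this
      rw [Finset.mem_filter] at this
      exact hv this.2
  exact absurd (hpmax _ hPmem) (by omega)

lemma adj_exists_of_reachable_ne {γ : ℕ} {x y : V} (hr : (cg col γ).Reachable x y)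
    (hne : x ≠ y) : ∃ a c : V, a ≠ c ∧ col s(a, c) = γ := by
  refine hr.elim fun w => ?_
  cases w with
  | nil => exact absurd rfl hne
  | cons hadj _ => exact ⟨_, _, hadj.1, hadj.2⟩

lemma mem_CA_of_spanset (h2 : 2 ≤ Fintype.card V) {γ : ℕ} (hγ : γ ∈ SpanSet col) :
    γ ∈ CA col := by
  obtain ⟨x, y, hxy⟩ := Fintype.exists_pair_of_one_lt_card (α := V) (by omega)
  obtain ⟨a, c, hac, hcol⟩ := adj_exists_of_reachable_ne (hγ.preconnected x y) hxy
  exact ⟨s(a, c), by simp [Sym2.isDiag_iff_proj_eq, hac], hcol⟩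

lemma spanset_nonempty (h : RBF col) (h2 : 2 ≤ Fintype.card V) :
    ∃ γ, γ ∈ SpanSet col := by
  obtain ⟨x, y, hxy⟩ := Fintype.exists_pair_of_one_lt_card (α := V) (by omega)
  obtain ⟨γ, x₀, -, hconcl⟩ := exists_max_comp h ∅ ⟨x, y, hxy, Set.notMem_empty _⟩
  refine ⟨γ, ?_⟩
  have hall : ∀ v, (cg col γ).Reachable x₀ v := by
    intro v
    by_contra hv
    exact (hconcl v hv).1
  exact (SimpleGraph.connected_iff _).mpr ⟨fun a b => (hall a).symm.trans (hall b), ⟨x₀⟩⟩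

lemma outG_spanset_disconnected (h : RBF col) (h2 : 2 ≤ Fintype.card V) :
    ∃ v w : V, ¬ (outG col (SpanSet col)).Reachable v w := by
  by_contra hc
  push_neg at hc
  by_cases hedge : ∃ x y : V, x ≠ y ∧ col s(x, y) ∉ SpanSet col
  · obtain ⟨γ, x₀, hγT, hconcl⟩ := exists_max_comp h (SpanSet col) hedge
    have hall : ∀ v, (cg col γ).Reachable x₀ v := by
      have key : ∀ a b : V, (outG col (SpanSet col)).Walk a b →
          (cg col γ).Reachable x₀ a → (cg col γ).Reachable x₀ b := by
        intro a b w
        induction w with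
        | nil => exact fun hx => hx
        | @cons a c b hadj w ih =>
            intro hra
            by_cases hrc : (cg col γ).Reachable x₀ c
            · exact ih hrc
            · exfalso
              obtain ⟨hmem, hsight⟩ := hconcl c hrc
              have : col s(c, a) = col s(c, x₀) := hsight a hra
              have hmem' : col s(a, c) ∈ SpanSet col := by
                rw [Sym2.eq_swap, this]; exact hmem
              exact hadj.2 hmem'
      intro v
      exact (hc x₀ v).elim fun w => key x₀ v w (SimpleGraph.Reachable.refl _)
    exact hγT ((SimpleGraph.connected_iff _).mpr ⟨fun a b => (hall a).symm.trans (hall b), ⟨x₀⟩⟩)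
  · push_neg at hedge
    obtain ⟨x, y, hxy⟩ := Fintype.exists_pair_of_one_lt_card (α := V) (by omega)
    obtain ⟨w⟩ := hc x y
    cases w with
    | nil => exact hxy rfl
    | cons hadj _ => exact hadj.2 (hedge _ _ hadj.1)

lemma RA_sub_CA : RA col ⊆ CA col := by
  rintro γ ⟨x, y, z, hxy, -, -, hc, -, -⟩
  exact ⟨s(x, y), by simp [Sym2.isDiag_iff_proj_eq, hxy], hc⟩

lemma CA_finite : (CA col).Finite := (Set.toFinite _).image col

lemma ncard_biUnion_le {ι : Type*} (s : Finset ι) (f : ι → Set ℕ)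
    (hf : ∀ i, (f i).Finite) :
    (⋃ i ∈ s, f i).ncard ≤ ∑ i ∈ s, (f i).ncard := by
  classical
  induction s using Finset.induction with
  | empty => simp
  | @insert a s ha ih =>
      rw [Finset.set_biUnion_insert, Finset.sum_insert ha]
      exact le_trans (Set.ncard_union_le _ _) (by omega)

lemma arith_key {t u a : ℕ} (ha : 1 ≤ a)
    (hle : 2 * (t * (a + 1)) + 2 * (u * a) ≤ (a + 1) * a) : t + u + t ≤ a := by
  by_contra hcon
  push_neg at hcon
  have h3 : a + 1 ≤ 2 * t + u := by omega
  have key : a * (2 * t + u) + (a * u + 2 * t) = 2 * (t * (a + 1)) + 2 * (u * a) := by ring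
  have h4 : a * (a + 1) ≤ a * (2 * t + u) := Nat.mul_le_mul_left a h3
  have h5 : (a + 1) * a = a * (a + 1) := Nat.mul_comm _ _
  have h6 : a * u + 2 * t ≤ 0 := by linarith
  have h7 : a * u = 0 := by omega
  have h8 : u = 0 := by
    rcases Nat.mul_eq_zero.mp h7 with h | h
    · omega
    · exact h
  omega

variable (col) in
def usedF : Finset ℕ :=
  ((Finset.univ : Finset (Sym2 V)).filter (fun e => ¬ e.IsDiag)).image col

variable (col) in
def SF : Finset ℕ := (usedF col).filter (· ∈ SpanSet col)

variable (col) in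
def TriProp (γ : ℕ) : Prop :=
  ∃ q1 q2 q3 : (outG col (SpanSet col)).ConnectedComponent,
    q1 ≠ q2 ∧ q1 ≠ q3 ∧ q2 ≠ q3 ∧ colQ col (SpanSet col) q1 q2 = γ ∧
      colQ col (SpanSet col) q1 q3 = γ ∧ colQ col (SpanSet col) q2 q3 = γ

variable (col) in
def TriF : Finset ℕ := (SF col).filter (TriProp col)

lemma coe_usedF : (↑(usedF col) : Set ℕ) = CA col := by
  ext γ
  simp only [usedF, Finset.coe_image, Finset.coe_filter, CA, Set.mem_image,
    Finset.mem_coe, Set.mem_setOf_eq, Finset.mem_univ, true_and]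

lemma coe_SF (h2 : 2 ≤ Fintype.card V) : (↑(SF col) : Set ℕ) = SpanSet col := by
  ext γ
  simp only [SF, Finset.coe_filter, Set.mem_setOf_eq, Finset.mem_filter]
  constructor
  · rintro ⟨-, h⟩; exact h
  · intro hγ
    refine ⟨?_, hγ⟩
    have := mem_CA_of_spanset h2 hγ
    rw [← coe_usedF] at this
    exact this

lemma counting (h : RBF col) (h2 : 2 ≤ Fintype.card V) :
    (SF col).card + (TriF col).card ≤
      Fintype.card ((outG col (SpanSet col)).ConnectedComponent) - 1 := by
  classical
  set S := SpanSet col with hS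
  set Q := (outG col S).ConnectedComponent with hQ
  set k := Fintype.card Q with hk
  have hk2 : 2 ≤ k := by
    obtain ⟨v, w, hvw⟩ := outG_spanset_disconnected h h2
    have : (outG col S).connectedComponentMk v ≠ (outG col S).connectedComponentMk w := by
      intro hmk
      exact hvw (reach_of_mk_eq hmk)
    exact Fintype.one_lt_card_iff.mpr ⟨_, _, this⟩
  set E : ℕ → Finset (Sym2 Q) := fun γ => (redG col S γ).edgeFinset with hE
  have hconnred : ∀ γ ∈ SF col, (redG col S γ).Connected := by
    intro γ hγ
    rw [SF, Finset.mem_filter] at hγ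
    exact redG_connected h S hγ.2
  have h1 : ∀ γ ∈ SF col, k - 1 ≤ (E γ).card := by
    intro γ hγ
    have h' : k ≤ (E γ).card + 1 := conn_card_le_edges _ (hconnred γ hγ)
    omega
  have h1' : ∀ γ ∈ TriF col, k ≤ (E γ).card := by
    intro γ hγ
    rw [TriF, Finset.mem_filter] at hγ
    obtain ⟨hγS, q1, q2, q3, h12, h13, h23, c12, c13, c23⟩ := hγ
    have h' : k + 1 ≤ (E γ).card + 1 := conn_tri_card_le_edges _ (hconnred γ hγS)
      (show (redG col S γ).Adj q1 q2 from ⟨h12, c12⟩)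
      (show (redG col S γ).Adj q1 q3 from ⟨h13, c13⟩)
      (show (redG col S γ).Adj q2 q3 from ⟨h23, c23⟩)
    omega
  have hdisj : ∀ γ ∈ SF col, ∀ δ ∈ SF col, γ ≠ δ → Disjoint (E γ) (E δ) := by
    intro γ _ δ _ hγδ
    rw [Finset.disjoint_left]
    intro e heγ heδ
    induction e with
    | _ q q' =>
        rw [hE, SimpleGraph.mem_edgeFinset, SimpleGraph.mem_edgeSet] at heγ heδ
        exact hγδ (heγ.2.symm.trans heδ.2)
  have hsum_le : ∑ γ ∈ SF col, (E γ).card ≤ k.choose 2 := by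
    rw [← Finset.card_biUnion hdisj]
    have hsub : (SF col).biUnion E ⊆ (⊤ : SimpleGraph Q).edgeFinset := by
      intro e he
      rw [Finset.mem_biUnion] at he
      obtain ⟨γ, -, he⟩ := he
      induction e with
      | _ q q' =>
          rw [hE, SimpleGraph.mem_edgeFinset, SimpleGraph.mem_edgeSet] at he
          rw [SimpleGraph.mem_edgeFinset, SimpleGraph.mem_edgeSet]
          exact he.1
    calc ((SF col).biUnion E).card ≤ _ := Finset.card_le_card hsub
      _ = k.choose 2 := by rw [SimpleGraph.card_edgeFinset_top_eq_card_choose_two]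
  have hsplit : ∑ γ ∈ SF col, (E γ).card =
      ∑ γ ∈ (SF col).filter (TriProp col), (E γ).card +
        ∑ γ ∈ (SF col).filter (fun γ => ¬ TriProp col γ), (E γ).card :=
    (Finset.sum_filter_add_sum_filter_not _ _ _).symm
  set t := (TriF col).card with ht
  set u := ((SF col).filter (fun γ => ¬ TriProp col γ)).card with hu
  have hcard_split : t + u = (SF col).card := by
    rw [ht, hu, TriF]
    exact Finset.card_filter_add_card_filter_not _
  have hlow1 : t * k ≤ ∑ γ ∈ (SF col).filter (TriProp col), (E γ).card := by
    rw [ht, TriF]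
    calc ((SF col).filter (TriProp col)).card * k
        = ∑ _γ ∈ (SF col).filter (TriProp col), k := by rw [Finset.sum_const, smul_eq_mul]
      _ ≤ _ := Finset.sum_le_sum (fun γ hγ => h1' γ (by rwa [TriF]))
  have hlow2 : u * (k - 1) ≤ ∑ γ ∈ (SF col).filter (fun γ => ¬ TriProp col γ), (E γ).card := by
    rw [hu]
    calc ((SF col).filter (fun γ => ¬ TriProp col γ)).card * (k - 1)
        = ∑ _γ ∈ (SF col).filter (fun γ => ¬ TriProp col γ), (k - 1) := by
          rw [Finset.sum_const, smul_eq_mul]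
      _ ≤ _ := Finset.sum_le_sum (fun γ hγ => h1 γ (Finset.mem_of_mem_filter _ hγ))
  have hchoose : 2 * k.choose 2 = k * (k - 1) := by
    rw [Nat.choose_two_right]
    have : 2 ∣ k * (k - 1) := by
      rcases Nat.even_or_odd k with he | ho
      · exact Dvd.dvd.mul_right he.two_dvd _
      · have : Even (k - 1) := by
          rcases ho with ⟨j, hj⟩
          exact ⟨j, by omega⟩
        exact Dvd.dvd.mul_left this.two_dvd _
    omega
  have hfinal : 2 * (t * k) + 2 * (u * (k - 1)) ≤ k * (k - 1) := by
    have : t * k + u * (k - 1) ≤ k.choose 2 := by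
      calc t * k + u * (k - 1) ≤ _ + _ := Nat.add_le_add hlow1 hlow2
        _ = ∑ γ ∈ SF col, (E γ).card := hsplit.symm
        _ ≤ k.choose 2 := hsum_le
    omega
  -- goal : (SF col).card + t ≤ k - 1
  have hgoal : t + u + t ≤ k - 1 := by
    have ha : 1 ≤ k - 1 := by omega
    have : k - 1 + 1 = k := by omega
    refine arith_key ha ?_
    rw [this]
    exact hfinal
  omega


lemma comp_card_ge_two (h : RBF col) (h2 : 2 ≤ Fintype.card V) :
    2 ≤ Fintype.card ((outG col (SpanSet col)).ConnectedComponent) := by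
  obtain ⟨v, w, hvw⟩ := outG_spanset_disconnected h h2
  have : (outG col (SpanSet col)).connectedComponentMk v ≠
      (outG col (SpanSet col)).connectedComponentMk w := by
    intro hmk
    exact hvw (reach_of_mk_eq hmk)
  exact Fintype.one_lt_card_iff.mpr ⟨_, _, this⟩

end Main

universe u

theorem aux (n : ℕ) : ∀ {V : Type u} [Fintype V] [DecidableEq V] (col : Sym2 V → ℕ),
    RBF col → Fintype.card V ≤ n →
    (CA col).ncard + (RA col).ncard ≤ Fintype.card V - 1 := by
  induction n with
  | zero =>
      intro V _ _ col h hcard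
      have hempty : IsEmpty V := by
        rw [← Fintype.card_eq_zero_iff]
        omega
      have hCA : CA col = ∅ := by
        rw [Set.eq_empty_iff_forall_notMem]
        rintro γ ⟨e, he, -⟩
        induction e with
        | _ x y => exact hempty.elim x
      have hRA : RA col = ∅ := by
        rw [Set.eq_empty_iff_forall_notMem]
        rintro γ ⟨x, -⟩
        exact hempty.elim x
      rw [hCA, hRA]
      simp
  | succ n ih =>
      intro V _ _ col h hcard
      by_cases hsmall : Fintype.card V ≤ 1
      · have hCA : CA col = ∅ := by
          rw [Set.eq_empty_iff_forall_notMem]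
          rintro γ ⟨e, he, -⟩
          induction e with
          | _ x y =>
              refine he ?_
              have : x = y := by
                rcases Fintype.card_le_one_iff.mp hsmall x y with hh
                exact hh
              rw [this]
              exact Sym2.mk_isDiag_iff.mpr rfl
        have hRA : RA col = ∅ := by
          rw [Set.eq_empty_iff_forall_notMem]
          rintro γ ⟨x, y, z, hxy, -⟩
          exact hxy (Fintype.card_le_one_iff.mp hsmall x y)
        rw [hCA, hRA]
        simp
      · push_neg at hsmall
        have h2 : 2 ≤ Fintype.card V := hsmall
        classical
        set S := SpanSet col with hSdef
        set G := outG col S with hGdef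
        set Q := G.ConnectedComponent with hQdef
        set mkc : V → Q := G.connectedComponentMk with hmkc
        set P : Q → Set V := fun q => {v | G.connectedComponentMk v = q} with hPdef
        set colP : (q : Q) → Sym2 (P q) → ℕ :=
          fun q e => col (Sym2.map Subtype.val e) with hcolP
        have hRBFP : ∀ q, RBF (colP q) := by
          intro q a b c hab hac hbc
          have hab' : (a : V) ≠ (b : V) := fun hh => hab (Subtype.ext hh)
          have hac' : (a : V) ≠ (c : V) := fun hh => hac (Subtype.ext hh)
          have hbc' : (b : V) ≠ (c : V) := fun hh => hbc (Subtype.ext hh)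
          have := h a.1 b.1 c.1 hab' hac' hbc'
          simpa [hcolP, Sym2.map_pair_eq] using this
        have hk2 : 2 ≤ Fintype.card Q := comp_card_ge_two h h2
        have hcardP : ∀ q, Fintype.card (P q) < Fintype.card V := by
          intro q
          obtain ⟨q', hq'⟩ := Fintype.exists_ne_of_one_lt_card (by omega) q
          refine Fintype.card_lt_of_injective_of_notMem
            (Subtype.val : P q → V) Subtype.coe_injective (b := q'.out) ?_
          rintro ⟨⟨v, hv⟩, hvout⟩
          apply hq'
          have hv' : G.connectedComponentMk v = q := hv
          have hvo : v = q'.out := hvout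
          rw [← mk_out S q', ← hvo]
          exact hv'
        have IH : ∀ q : Q, (CA (colP q)).ncard + (RA (colP q)).ncard ≤
            Fintype.card (P q) - 1 := by
          intro q
          exact ih (colP q) (hRBFP q) (by have := hcardP q; omega)
        -- covering sets
        set UC : Set ℕ := ⋃ q ∈ (Finset.univ : Finset Q), CA (colP q) with hUC
        set UR : Set ℕ := ⋃ q ∈ (Finset.univ : Finset Q), RA (colP q) with hUR
        set TC : Set ℕ := CA col \ UC with hTC
        set TR : Set ℕ := RA col \ UR with hTR
        have hCAground : ∀ (γ : ℕ) (x y : V) (hq : mkc x = mkc y), x ≠ y →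
            col s(x, y) = γ → γ ∈ CA (colP (mkc x)) := by
          intro γ x y hq hxy hcolxy
          refine ⟨s(⟨x, rfl⟩, ⟨y, hq.symm⟩), ?_, ?_⟩
          · intro hdiag
            rw [Sym2.mk_isDiag_iff] at hdiag
            exact hxy (congrArg Subtype.val hdiag)
          · simp only [hcolP, Sym2.map_pair_eq]
            exact hcolxy
        have hTCS : TC ⊆ S := by
          rintro γ ⟨⟨e, hend, hecol⟩, hγUC⟩
          induction e with
          | _ x y =>
              have hxy : x ≠ y := fun hh => hend (Sym2.mk_isDiag_iff.mpr hh)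
              by_cases hq : mkc x = mkc y
              · exfalso
                apply hγUC
                rw [hUC]
                apply Set.mem_biUnion (Finset.mem_univ (mkc x))
                exact hCAground γ x y hq hxy hecol
              · rw [← hecol]
                exact cross_mem S hq
        have hRAground : ∀ (γ : ℕ) (x y z : V), mkc x = mkc y → mkc x = mkc z →
            x ≠ y → x ≠ z → y ≠ z →
            col s(x, y) = γ → col s(x, z) = γ → col s(y, z) = γ →
            γ ∈ RA (colP (mkc x)) := by
          intro γ x y z e1 e2 hxy hxz hyz c1 c2 c3
          refine ⟨⟨x, rfl⟩, ⟨y, e1.symm⟩, ⟨z, e2.symm⟩,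
            fun hh => hxy (congrArg Subtype.val hh),
            fun hh => hxz (congrArg Subtype.val hh),
            fun hh => hyz (congrArg Subtype.val hh), ?_, ?_, ?_⟩ <;>
          · simp only [hcolP, Sym2.map_pair_eq]
            assumption
        have hTRS : TR ⊆ S := by
          rintro γ ⟨⟨x, y, z, hxy, hxz, hyz, c1, c2, c3⟩, hγUR⟩
          by_cases e1 : mkc x = mkc y
          · by_cases e2 : mkc x = mkc z
            · exfalso
              apply hγUR
              rw [hUR]
              apply Set.mem_biUnion (Finset.mem_univ (mkc x))
              exact hRAground γ x y z e1 e2 hxy hxz hyz c1 c2 c3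
            · rw [← c2]; exact cross_mem S e2
          · rw [← c1]; exact cross_mem S e1
        have hTCTR : TC ∩ TR ⊆ ↑(TriF col) := by
          rintro γ ⟨hγTC, hγTR⟩
          have hγS : γ ∈ S := hTCS hγTC
          obtain ⟨⟨x, y, z, hxy, hxz, hyz, c1, c2, c3⟩, hγUR⟩ := hγTR
          obtain ⟨hγCA, hγUC⟩ := hγTC
          have hd1 : mkc x ≠ mkc y := by
            intro hq
            apply hγUC
            rw [hUC]
            exact Set.mem_biUnion (Finset.mem_univ (mkc x))
              (hCAground γ x y hq hxy c1)
          have hd2 : mkc x ≠ mkc z := by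
            intro hq
            apply hγUC
            rw [hUC]
            exact Set.mem_biUnion (Finset.mem_univ (mkc x))
              (hCAground γ x z hq hxz c2)
          have hd3 : mkc y ≠ mkc z := by
            intro hq
            apply hγUC
            rw [hUC]
            exact Set.mem_biUnion (Finset.mem_univ (mkc y))
              (hCAground γ y z hq hyz c3)
          rw [Finset.mem_coe, TriF, Finset.mem_filter]
          constructor
          · rw [SF, Finset.mem_filter]
            constructor
            · have : γ ∈ (↑(usedF col) : Set ℕ) := by rw [coe_usedF]; exact hγCA
              exact this
            · exact hγS
          · exact ⟨mkc x, mkc y, mkc z, hd1, hd2, hd3,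
              ((colQ_spec h S hd1).symm.trans c1),
              ((colQ_spec h S hd2).symm.trans c2),
              ((colQ_spec h S hd3).symm.trans c3)⟩
        -- finiteness
        have hCAfin : (CA col).Finite := CA_finite
        have hCAPfin : ∀ q, (CA (colP q)).Finite := fun q => CA_finite
        have hRAPfin : ∀ q, (RA (colP q)).Finite := fun q => (hCAPfin q).subset RA_sub_CA
        have hUCfin : UC.Finite := Set.Finite.biUnion (Finset.finite_toSet _)
          (fun q _ => hCAPfin q)
        have hURfin : UR.Finite := Set.Finite.biUnion (Finset.finite_toSet _)
          (fun q _ => hRAPfin q)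
        have hTCfin : TC.Finite := hCAfin.subset Set.diff_subset
        have hTRfin : TR.Finite := (hCAfin.subset RA_sub_CA).subset Set.diff_subset
        -- ncard chains
        have hCAcover : (CA col).ncard ≤ UC.ncard + TC.ncard := by
          have hsub : CA col ⊆ UC ∪ TC := by
            intro γ hγ
            by_cases hm : γ ∈ UC
            · exact Or.inl hm
            · exact Or.inr ⟨hγ, hm⟩
          calc (CA col).ncard ≤ (UC ∪ TC).ncard :=
                Set.ncard_le_ncard hsub (hUCfin.union hTCfin)
            _ ≤ UC.ncard + TC.ncard := Set.ncard_union_le _ _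
        have hRAcover : (RA col).ncard ≤ UR.ncard + TR.ncard := by
          have hsub : RA col ⊆ UR ∪ TR := by
            intro γ hγ
            by_cases hm : γ ∈ UR
            · exact Or.inl hm
            · exact Or.inr ⟨hγ, hm⟩
          calc (RA col).ncard ≤ (UR ∪ TR).ncard :=
                Set.ncard_le_ncard hsub (hURfin.union hTRfin)
            _ ≤ UR.ncard + TR.ncard := Set.ncard_union_le _ _
        have hUCsum : UC.ncard ≤ ∑ q : Q, (CA (colP q)).ncard :=
          ncard_biUnion_le Finset.univ _ hCAPfin
        have hURsum : UR.ncard ≤ ∑ q : Q, (RA (colP q)).ncard :=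
          ncard_biUnion_le Finset.univ _ hRAPfin
        have hTbound : TC.ncard + TR.ncard ≤ (SF col).card + (TriF col).card := by
          have heq := Set.ncard_union_add_ncard_inter TC TR hTCfin hTRfin
          have hb1 : (TC ∪ TR).ncard ≤ (SF col).card := by
            have hsub : TC ∪ TR ⊆ (↑(SF col) : Set ℕ) := by
              rw [coe_SF h2]
              exact Set.union_subset hTCS hTRS
            calc (TC ∪ TR).ncard ≤ (↑(SF col) : Set ℕ).ncard :=
                  Set.ncard_le_ncard hsub (Finset.finite_toSet _)
              _ = (SF col).card := Set.ncard_coe_finset _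
          have hb2 : (TC ∩ TR).ncard ≤ (TriF col).card := by
            calc (TC ∩ TR).ncard ≤ (↑(TriF col) : Set ℕ).ncard :=
                  Set.ncard_le_ncard hTCTR (Finset.finite_toSet _)
              _ = (TriF col).card := Set.ncard_coe_finset _
          omega
        have hcount : (SF col).card + (TriF col).card ≤ Fintype.card Q - 1 :=
          counting h h2
        -- partition cardinalities
        have hcard_eq : ∀ q : Q, Fintype.card (P q) =
            (Finset.univ.filter (fun v => mkc v = q)).card := by
          intro q
          rw [Fintype.card_subtype]
          rfl
        have hsumP : ∑ q : Q, Fintype.card (P q) = Fintype.card V := by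
          rw [← Finset.card_univ (α := V)]
          rw [Finset.card_eq_sum_card_fiberwise
            (f := mkc) (t := Finset.univ) (fun v _ => Finset.mem_univ _)]
          exact Finset.sum_congr rfl (fun q _ => hcard_eq q)
        have hnonempty : ∀ q : Q, 1 ≤ Fintype.card (P q) := by
          intro q
          obtain ⟨v, hv⟩ := q.exists_rep
          have : Nonempty (P q) := ⟨⟨v, hv⟩⟩
          exact Fintype.card_pos_iff.mpr this
        have hk_le : Fintype.card Q ≤ Fintype.card V := by
          calc Fintype.card Q = ∑ _q : Q, 1 := by
                rw [Finset.sum_const, smul_eq_mul, mul_one, Finset.card_univ]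
            _ ≤ ∑ q : Q, Fintype.card (P q) := Finset.sum_le_sum (fun q _ => hnonempty q)
            _ = Fintype.card V := hsumP
        have hsumpart : ∑ q : Q, (Fintype.card (P q) - 1) =
            Fintype.card V - Fintype.card Q := by
          have : ∑ q : Q, (Fintype.card (P q) - 1) + Fintype.card Q
              = Fintype.card V := by
            calc ∑ q : Q, (Fintype.card (P q) - 1) + Fintype.card Q
                = ∑ q : Q, (Fintype.card (P q) - 1) + ∑ _q : Q, 1 := by
                  rw [Finset.sum_const, smul_eq_mul, mul_one, Finset.card_univ]
              _ = ∑ q : Q, ((Fintype.card (P q) - 1) + 1) := by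
                  rw [Finset.sum_add_distrib]
              _ = ∑ q : Q, Fintype.card (P q) :=
                  Finset.sum_congr rfl (fun q _ => by have := hnonempty q; omega)
              _ = Fintype.card V := hsumP
          omega
        have hIHsum : ∑ q : Q, ((CA (colP q)).ncard + (RA (colP q)).ncard) ≤
            Fintype.card V - Fintype.card Q := by
          rw [← hsumpart]
          exact Finset.sum_le_sum (fun q _ => IH q)
        have hfin : (CA col).ncard + (RA col).ncard ≤
            (∑ q : Q, ((CA (colP q)).ncard + (RA (colP q)).ncard)) +
              (TC.ncard + TR.ncard) := by
          rw [Finset.sum_add_distrib]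
          omega
        have : (CA col).ncard + (RA col).ncard ≤
            (Fintype.card V - Fintype.card Q) + (Fintype.card Q - 1) := by
          calc (CA col).ncard + (RA col).ncard
              ≤ _ + (TC.ncard + TR.ncard) := hfin
            _ ≤ (Fintype.card V - Fintype.card Q) + (Fintype.card Q - 1) := by
              have := hTbound
              have := hcount
              have := hIHsum
              omega
        omega

end GallaiAux


/-- Gallai-coloring lemma with monochromatic-triangle colors: if an
edge-coloring of a complete graph on a finite nonempty vertex set has no
rainbow triangle, then the number of colors used plus the number of colors
containing a monochromatic triangle is at most `|V| - 1`. -/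
theorem gallai_colors_add_rho (V : Type*) [Fintype V] [DecidableEq V]
    (hV : Nonempty V) (col : Sym2 V → ℕ)
    (hrb : ∀ x y z : V, x ≠ y → x ≠ z → y ≠ z →
      ¬ (col s(x, y) ≠ col s(x, z) ∧ col s(x, y) ≠ col s(y, z) ∧
         col s(x, z) ≠ col s(y, z))) :
    (col '' {e : Sym2 V | ¬ e.IsDiag}).ncard +
      {lam : ℕ | ∃ x y z : V, x ≠ y ∧ x ≠ z ∧ y ≠ z ∧
        col s(x, y) = lam ∧ col s(x, z) = lam ∧ col s(y, z) = lam}.ncard ≤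
      Fintype.card V - 1 :=
  GallaiAux.aux (Fintype.card V) col hrb le_rfl
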